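/- There is a universal constant C such that for every u ∈ ℝ, every δ > 0 and every measurable g : ℝ³ → [0,M] that vanishes whenever |v₁ − u| > δ, one has ∫_{ℝ³} g(v) dv ≤ C (M δ)^{1/2} (∫_{ℝ³} |v|² g(v) dv)^{1/2}. -/

import Mathlib

noncomputable section
open MeasureTheory Real Set

/-- Three-dimensional Euclidean space. -/
abbrev E3 : Type := EuclideanSpace ℝ (Fin 3)

/-- The cross product on `ℝ³`. -/
def cross3 (a b : E3) : E3 :=
  WithLp.toLp 2 ![a 1 * b 2 - a 2 * b 1, a 2 * b 0 - a 0 * b 2, a 0 * b 1 - a 1 * b 0]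

/-- The open cylinder of radius `A` about the `x₁`-axis. -/
def cyl (A : ℝ) : Set E3 := {x : E3 | x 1 ^ 2 + x 2 ^ 2 < A ^ 2}

/-- The external magnetic field `B(x) = ((A² - (x₂²+x₃²))^{-θ}, 0, 0)`. -/
def Bf (A θ : ℝ) (x : E3) : E3 := WithLp.toLp 2 ![(A ^ 2 - (x 1 ^ 2 + x 2 ^ 2)) ^ (-θ), 0, 0]

set_option maxHeartbeats 1000000 in
/-- Slab interpolation: if `0 ≤ g ≤ M` vanishes outside the slab `{|v₁ - u| ≤ δ}`, then
`∫ g ≤ C (Mδ)^{1/2} (∫ |v|² g)^{1/2}` with a universal constant `C`. -/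
theorem slab_moment_interpolation :
    ∃ C : ℝ, 0 < C ∧
      ∀ M u δ : ℝ, 0 < M → 0 < δ →
        ∀ g : E3 → ℝ, Measurable g → (∀ v, 0 ≤ g v) → (∀ v, g v ≤ M) →
          (∀ v : E3, δ < |v 0 - u| → g v = 0) →
          Integrable (fun v : E3 => ‖v‖ ^ 2 * g v) →
          (∫ v : E3, g v) ≤
            C * (M * δ) ^ ((1:ℝ)/2) * (∫ v : E3, ‖v‖ ^ 2 * g v) ^ ((1:ℝ)/2) := by
  refine ⟨6, by norm_num, ?_⟩
  intro M u δ hM hδ g hg hg0 hgM hsupp hint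
  set I2 : ℝ := ∫ v : E3, ‖v‖ ^ 2 * g v with hI2def
  have hI2nn : 0 ≤ I2 := integral_nonneg fun v => mul_nonneg (sq_nonneg _) (hg0 v)
  have hcoord : ∀ i : Fin 3, Measurable (fun v : E3 => v i) := by
    intro i
    exact (measurable_pi_apply i).comp (MeasurableEquiv.toLp 2 (Fin 3 → ℝ)).symm.measurable
  have hnorm : ∀ v : E3, (v 1) ^ 2 + (v 2) ^ 2 ≤ ‖v‖ ^ 2 := by
    intro v
    rw [EuclideanSpace.norm_eq, Real.sq_sqrt (by positivity)]
    rw [Fin.sum_univ_three]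
    simp only [Real.norm_eq_abs, sq_abs]
    nlinarith [sq_nonneg (v 0)]
  -- integrability of the transverse second moment
  have hint12 : Integrable (fun v : E3 => ((v 1) ^ 2 + (v 2) ^ 2) * g v) := by
    refine hint.mono' ?_ ?_
    · exact (((hcoord 1).pow_const 2).add ((hcoord 2).pow_const 2)).mul hg
        |>.aestronglyMeasurable
    · filter_upwards with v
      rw [Real.norm_eq_abs, abs_of_nonneg (mul_nonneg (by positivity) (hg0 v))]
      exact mul_le_mul_of_nonneg_right (hnorm v) (hg0 v)
  have key : ∀ a : ℝ, 0 < a →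
      (∫ v : E3, g v) ≤ 8 * M * δ * a ^ 2 + (a ^ 2)⁻¹ * I2 := by
    intro a ha
    set box : Fin 3 → Set ℝ := ![Icc (u - δ) (u + δ), Icc (-a) a, Icc (-a) a] with hbox
    set S : Set E3 := (⇑(MeasurableEquiv.toLp 2 (Fin 3 → ℝ)).symm) ⁻¹' (univ.pi box) with hSdef
    have hboxmeas : MeasurableSet (univ.pi box) := by
      refine MeasurableSet.univ_pi fun i => ?_
      fin_cases i <;> simp [hbox]
    have hSmeas : MeasurableSet S :=
      (MeasurableEquiv.toLp 2 (Fin 3 → ℝ)).symm.measurable hboxmeas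
    have hSvol : volume S = ENNReal.ofReal (2 * δ) *
        ENNReal.ofReal (2 * a) * ENNReal.ofReal (2 * a) := by
      rw [hSdef, (EuclideanSpace.volume_preserving_symm_measurableEquiv_toLp (Fin 3)).measure_preimage
        hboxmeas.nullMeasurableSet, volume_pi_pi, Fin.prod_univ_three]
      simp only [hbox, Matrix.cons_val_zero, Matrix.cons_val_one, Matrix.head_cons,
        Matrix.cons_val_two, Matrix.tail_cons, Real.volume_Icc]
      rw [show u + δ - (u - δ) = 2 * δ by ring, show a - -a = 2 * a by ring]
    have hSfin : volume S < ⊤ := by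
      rw [hSvol]
      exact ENNReal.mul_lt_top
        (ENNReal.mul_lt_top ENNReal.ofReal_lt_top ENNReal.ofReal_lt_top) ENNReal.ofReal_lt_top
    have hSvolr : (volume S).toReal = 8 * δ * a ^ 2 := by
      rw [hSvol, ENNReal.toReal_mul, ENNReal.toReal_mul,
        ENNReal.toReal_ofReal (by positivity : (0:ℝ) ≤ 2 * δ),
        ENNReal.toReal_ofReal (by positivity : (0:ℝ) ≤ 2 * a)]
      ring
    have hmemS : ∀ v : E3, |v 0 - u| ≤ δ → (v 1) ^ 2 + (v 2) ^ 2 ≤ a ^ 2 → v ∈ S := by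
      intro v h0 h12
      simp only [hSdef, Set.mem_preimage, Set.mem_univ_pi]
      intro i
      have e : ∀ j : Fin 3, (MeasurableEquiv.toLp 2 (Fin 3 → ℝ)).symm v j = v j := fun _ => rfl
      have h0' := abs_le.mp h0
      have h1 : -a ≤ v 1 ∧ v 1 ≤ a := by
        constructor <;> nlinarith [sq_nonneg (v 1 - a), sq_nonneg (v 1 + a), sq_nonneg (v 2)]
      have h2 : -a ≤ v 2 ∧ v 2 ≤ a := by
        constructor <;> nlinarith [sq_nonneg (v 2 - a), sq_nonneg (v 2 + a), sq_nonneg (v 1)]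
      fin_cases i
      · show v 0 ∈ Icc (u - δ) (u + δ)
        exact mem_Icc.mpr ⟨by linarith [h0'.1], by linarith [h0'.2]⟩
      · show v 1 ∈ Icc (-a) a
        exact mem_Icc.mpr ⟨h1.1, h1.2⟩
      · show v 2 ∈ Icc (-a) a
        exact mem_Icc.mpr ⟨h2.1, h2.2⟩
    -- pointwise bound
    have hpt : ∀ v : E3, g v ≤ M * S.indicator (fun _ => (1:ℝ)) v
        + (a ^ 2)⁻¹ * (((v 1) ^ 2 + (v 2) ^ 2) * g v) := by
      intro v
      have hind : 0 ≤ S.indicator (fun _ => (1:ℝ)) v :=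
        Set.indicator_nonneg (fun _ _ => zero_le_one) v
      have hsecond : 0 ≤ (a ^ 2)⁻¹ * (((v 1) ^ 2 + (v 2) ^ 2) * g v) := by
        have := hg0 v; positivity
      by_cases h0 : δ < |v 0 - u|
      · rw [hsupp v h0]; positivity
      push_neg at h0
      by_cases h12 : (v 1) ^ 2 + (v 2) ^ 2 ≤ a ^ 2
      · rw [Set.indicator_of_mem (hmemS v h0 h12)]
        have := hgM v
        nlinarith
      · push_neg at h12
        have h1 : a ^ 2 * g v ≤ ((v 1) ^ 2 + (v 2) ^ 2) * g v :=
          mul_le_mul_of_nonneg_right h12.le (hg0 v)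
        have h2 : (a ^ 2)⁻¹ * (a ^ 2 * g v) ≤ (a ^ 2)⁻¹ * (((v 1) ^ 2 + (v 2) ^ 2) * g v) :=
          mul_le_mul_of_nonneg_left h1 (by positivity)
        rw [inv_mul_cancel_left₀ (by positivity)] at h2
        nlinarith [mul_nonneg hM.le hind]
    -- integrability of the dominating function
    have hf1 : Integrable (fun v : E3 => M * S.indicator (fun _ => (1:ℝ)) v) := by
      refine Integrable.const_mul ?_ M
      exact (integrableOn_const hSfin.ne).integrable_indicator hSmeas
    have hf2 : Integrable (fun v : E3 => (a ^ 2)⁻¹ * (((v 1) ^ 2 + (v 2) ^ 2) * g v)) :=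
      hint12.const_mul _
    have hintg : Integrable g := by
      refine (hf1.add hf2).mono' hg.aestronglyMeasurable ?_
      filter_upwards with v
      rw [Real.norm_eq_abs, abs_of_nonneg (hg0 v)]
      exact hpt v
    calc (∫ v : E3, g v)
        ≤ ∫ v : E3, (M * S.indicator (fun _ => (1:ℝ)) v
            + (a ^ 2)⁻¹ * (((v 1) ^ 2 + (v 2) ^ 2) * g v)) :=
          integral_mono hintg (hf1.add hf2) hpt
      _ = M * (volume S).toReal + (a ^ 2)⁻¹ * ∫ v : E3, ((v 1) ^ 2 + (v 2) ^ 2) * g v := by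
          rw [integral_add hf1 hf2, integral_const_mul, integral_const_mul,
            integral_indicator_const (1:ℝ) hSmeas, smul_eq_mul, mul_one, Measure.real]
      _ ≤ 8 * M * δ * a ^ 2 + (a ^ 2)⁻¹ * I2 := by
          have hmono : (∫ v : E3, ((v 1) ^ 2 + (v 2) ^ 2) * g v) ≤ I2 := by
            refine integral_mono hint12 hint fun v => ?_
            exact mul_le_mul_of_nonneg_right (hnorm v) (hg0 v)
          have := mul_le_mul_of_nonneg_left hmono (by positivity : (0:ℝ) ≤ (a ^ 2)⁻¹)
          rw [hSvolr]
          nlinarith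
  -- now optimize over a
  have hrw : (M * δ) ^ ((1:ℝ)/2) = Real.sqrt (M * δ) := (Real.sqrt_eq_rpow _).symm
  have hrw2 : I2 ^ ((1:ℝ)/2) = Real.sqrt I2 := (Real.sqrt_eq_rpow _).symm
  rw [hrw, hrw2]
  set s := Real.sqrt (M * δ) with hs
  set t := Real.sqrt I2 with ht
  have hspos : 0 < s := Real.sqrt_pos.mpr (by positivity)
  have hs2 : s ^ 2 = M * δ := Real.sq_sqrt (by positivity)
  have ht2 : t ^ 2 = I2 := Real.sq_sqrt hI2nn
  rcases eq_or_lt_of_le hI2nn with h0 | hpos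
  · -- I2 = 0 : the integral of g must vanish
    have hle : (∫ v : E3, g v) ≤ 0 := by
      refine le_of_forall_pos_le_add fun ε hε => ?_
      obtain ⟨a, ha, haε⟩ : ∃ a : ℝ, 0 < a ∧ 8 * M * δ * a ^ 2 ≤ ε := by
        refine ⟨Real.sqrt (ε / (8 * M * δ)), Real.sqrt_pos.mpr (by positivity), ?_⟩
        rw [Real.sq_sqrt (by positivity)]
        rw [mul_div_cancel₀ _ (by positivity)]
      have := key a ha
      rw [← h0] at this
      simpa using this.trans (by linarith)
    have : t = 0 := by rw [ht, ← h0, Real.sqrt_zero]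
    rw [this]
    simpa using hle
  · have htpos : 0 < t := Real.sqrt_pos.mpr hpos
    set a := Real.sqrt (t / (3 * s)) with haa
    have hapos : 0 < a := Real.sqrt_pos.mpr (by positivity)
    have ha2 : a ^ 2 = t / (3 * s) := Real.sq_sqrt (by positivity)
    have := key a hapos
    have ha2' : t = 3 * s * a ^ 2 := by
      rw [ha2]; field_simp
    clear_value I2 s t a
    clear key hrw hrw2 hs ht haa hI2def hnorm hcoord hint hint12 hsupp hgM hg0 hg
    have e1 : 8 * M * δ * a ^ 2 = 8 * s ^ 2 * a ^ 2 := by rw [hs2]; ring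
    have e2 : (a ^ 2)⁻¹ * I2 = 9 * s ^ 2 * a ^ 2 := by
      rw [← ht2, ha2']
      field_simp
      ring
    have e3 : 6 * s * t = 18 * s ^ 2 * a ^ 2 := by rw [ha2']; ring
    have hb : 8 * M * δ * a ^ 2 + (a ^ 2)⁻¹ * I2 ≤ 6 * s * t := by
      rw [e1, e2, e3]
      nlinarith [mul_pos (mul_pos hspos hspos) (mul_pos hapos hapos)]
    exact this.trans hb
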